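/- Let a, b be nonzero complex numbers with |ab| < 1. Then f(−a, −b) = f(a³b, ab³) − a · f(a⁵b³, a⁻¹b), i.e., the m = 2 transformation expresses f(−a,−b) as the even dissection component minus the odd dissection component. -/

import Mathlib

open Filter

/-- Ramanujan's theta function `f(a,b) = ∑_{n ∈ ℤ} a^(n(n+1)/2) * b^(n(n-1)/2)`. -/
noncomputable def ramanujanTheta (a b : ℂ) : ℂ :=
  ∑' n : ℤ, a ^ (n * (n + 1) / 2) * b ^ (n * (n - 1) / 2)

private lemma half_eq {x y : ℤ} (h : x = 2 * y) : x / 2 = y := by omega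

private lemma dvd_consec (n : ℤ) : 2 ∣ n * (n + 1) := (Int.even_mul_succ_self n).two_dvd

private lemma dvd_pred (n : ℤ) : 2 ∣ n * (n - 1) := by
  have := dvd_consec (n - 1)
  have h : (n - 1) * (n - 1 + 1) = n * (n - 1) := by ring
  rwa [h] at this

/-- Combine powers: `(a^c b^d)^p (a^e b^f)^q = a^(cp+eq) b^(dp+fq)`. -/
private lemma zpow_comb (a b : ℂ) (ha : a ≠ 0) (hb : b ≠ 0) (c d e f p q : ℤ) :
    (a ^ c * b ^ d) ^ p * (a ^ e * b ^ f) ^ q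
      = a ^ (c * p + e * q) * b ^ (d * p + f * q) := by
  rw [mul_zpow, mul_zpow, ← zpow_mul, ← zpow_mul, ← zpow_mul, ← zpow_mul,
    zpow_add₀ ha, zpow_add₀ hb]
  ring

/-- Summability of the theta series restricted to naturals. -/
private lemma summable_theta_nat (a b : ℂ) (ha : a ≠ 0) (hb : b ≠ 0)
    (hab : ‖a * b‖ < 1) :
    Summable (fun n : ℕ =>
      a ^ ((n : ℤ) * ((n : ℤ) + 1) / 2) * b ^ ((n : ℤ) * ((n : ℤ) - 1) / 2)) := by
  apply summable_of_ratio_norm_eventually_le (r := 1/2) (by norm_num)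
  have htend : Tendsto (fun n : ℕ => ‖a‖ * ‖a * b‖ ^ n) atTop (nhds 0) := by
    simpa using (tendsto_pow_atTop_nhds_zero_of_lt_one
      (norm_nonneg _) hab).const_mul ‖a‖
  filter_upwards [htend.eventually_le_const (by norm_num : (0:ℝ) < 1/2)] with n hn
  have key : a ^ ((((n+1) : ℕ) : ℤ) * ((((n+1) : ℕ) : ℤ) + 1) / 2)
        * b ^ ((((n+1) : ℕ) : ℤ) * ((((n+1) : ℕ) : ℤ) - 1) / 2)
      = (a * (a * b) ^ n)
        * (a ^ ((n : ℤ) * ((n : ℤ) + 1) / 2) * b ^ ((n : ℤ) * ((n : ℤ) - 1) / 2)) := by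
    obtain ⟨p, hp⟩ := dvd_consec (n : ℤ)
    obtain ⟨q, hq⟩ := dvd_pred (n : ℤ)
    push_cast
    rw [show ((n:ℤ)+1) * ((n:ℤ)+1+1) / 2 = p + ((n:ℤ) + 1) from
          half_eq (by linear_combination hp),
        show ((n:ℤ)+1) * ((n:ℤ)+1-1) / 2 = q + (n:ℤ) from
          half_eq (by linear_combination hq),
        show (n:ℤ) * ((n:ℤ)+1) / 2 = p from half_eq hp,
        show (n:ℤ) * ((n:ℤ)-1) / 2 = q from half_eq hq,
        zpow_add₀ ha, zpow_add₀ hb,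
        show a * (a*b)^n = a ^ ((n:ℤ)+1) * b ^ (n:ℤ) by
          rw [mul_pow, ← zpow_natCast a n, ← zpow_natCast b n, zpow_add_one₀ ha]; ring]
    ring
  calc ‖a ^ ((((n+1) : ℕ) : ℤ) * ((((n+1) : ℕ) : ℤ) + 1) / 2)
        * b ^ ((((n+1) : ℕ) : ℤ) * ((((n+1) : ℕ) : ℤ) - 1) / 2)‖
      = (‖a‖ * ‖a * b‖ ^ n)
        * ‖a ^ ((n : ℤ) * ((n : ℤ) + 1) / 2) * b ^ ((n : ℤ) * ((n : ℤ) - 1) / 2)‖ := by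
        rw [key, norm_mul]
        congr 1
        simp [norm_mul, norm_pow]
    _ ≤ (1/2) * ‖a ^ ((n : ℤ) * ((n : ℤ) + 1) / 2) * b ^ ((n : ℤ) * ((n : ℤ) - 1) / 2)‖ :=
        mul_le_mul_of_nonneg_right hn (norm_nonneg _)

/-- Summability of the full theta series over `ℤ`. -/
private lemma summable_theta (a b : ℂ) (ha : a ≠ 0) (hb : b ≠ 0)
    (hab : ‖a * b‖ < 1) :
    Summable (fun n : ℤ => a ^ (n * (n + 1) / 2) * b ^ (n * (n - 1) / 2)) := by
  apply Summable.of_nat_of_neg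
  · exact summable_theta_nat a b ha hb hab
  · apply (summable_theta_nat b a hb ha (by rwa [mul_comm] at hab)).congr
    intro n
    rw [show (-(n:ℤ)) * (-(n:ℤ) + 1) = (n:ℤ) * ((n:ℤ) - 1) by ring,
        show (-(n:ℤ)) * (-(n:ℤ) - 1) = (n:ℤ) * ((n:ℤ) + 1) by ring]
    ring

/-- Even/odd splitting of a sum over `ℤ`. -/
private lemma hasSum_int_even_add_odd {f : ℤ → ℂ} {m m' : ℂ}
    (he : HasSum (fun k : ℤ => f (2 * k)) m)
    (ho : HasSum (fun k : ℤ => f (2 * k + 1)) m') : HasSum f (m + m') := by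
  have hinj : Function.Injective (fun k : ℤ => 2 * k) := fun x y h => by simp only at h; omega
  have hinj' : Function.Injective (fun k : ℤ => 2 * k + 1) := fun x y h => by simp only at h; omega
  refine HasSum.add_isCompl ?_ (hinj.hasSum_range_iff.2 he) (hinj'.hasSum_range_iff.2 ho)
  have h1 : Set.range (fun k : ℤ => 2 * k) = {n : ℤ | Even n} := by
    ext n
    simp only [Set.mem_range, Set.mem_setOf_eq, Int.even_iff]
    constructor
    · rintro ⟨k, rfl⟩; omega
    · intro h; exact ⟨n / 2, by omega⟩
  have h2 : Set.range (fun k : ℤ => 2 * k + 1) = {n : ℤ | Odd n} := by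
    ext n
    simp only [Set.mem_range, Set.mem_setOf_eq, Int.odd_iff]
    constructor
    · rintro ⟨k, rfl⟩; omega
    · intro h; exact ⟨n / 2, by omega⟩
  rw [h1, h2]
  exact Int.isCompl_even_odd

theorem theta_neg_transform (a b : ℂ) (ha : a ≠ 0) (hb : b ≠ 0)
    (hab : ‖a * b‖ < 1) :
    ramanujanTheta (-a) (-b) =
      ramanujanTheta (a ^ 3 * b) (a * b ^ 3) - a * ramanujanTheta (a ^ 5 * b ^ 3) (a⁻¹ * b) := by
  have hab4 : ‖a ^ 3 * b * (a * b ^ 3)‖ < 1 := by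
    rw [show a ^ 3 * b * (a * b ^ 3) = (a*b)^4 by ring, norm_pow]
    calc ‖a*b‖ ^ 4 ≤ ‖a*b‖ := by
          apply pow_le_of_le_one (norm_nonneg _) hab.le (by norm_num)
      _ < 1 := hab
  have hab4' : ‖a ^ 5 * b ^ 3 * (a⁻¹ * b)‖ < 1 := by
    rw [show a ^ 5 * b ^ 3 * (a⁻¹ * b) = (a*b)^4 * (a * a⁻¹) by ring, mul_inv_cancel₀ ha,
      mul_one, norm_pow]
    calc ‖a*b‖ ^ 4 ≤ ‖a*b‖ := by
          apply pow_le_of_le_one (norm_nonneg _) hab.le (by norm_num)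
      _ < 1 := hab
  have ha1 : a ^ 3 * b ≠ 0 := mul_ne_zero (pow_ne_zero _ ha) hb
  have ha2 : a * b ^ 3 ≠ 0 := mul_ne_zero ha (pow_ne_zero _ hb)
  have ha3 : a ^ 5 * b ^ 3 ≠ 0 := mul_ne_zero (pow_ne_zero _ ha) (pow_ne_zero _ hb)
  have ha4 : a⁻¹ * b ≠ 0 := mul_ne_zero (inv_ne_zero ha) hb
  have h1 := (summable_theta _ _ ha1 ha2 hab4).hasSum
  have h2 := (summable_theta _ _ ha3 ha4 hab4').hasSum
  have h2' := (h2.mul_left a).neg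
  -- pointwise identities
  have heven : ∀ m : ℤ,
      (-a) ^ ((2*m) * (2*m + 1) / 2) * (-b) ^ ((2*m) * (2*m - 1) / 2)
        = (a^3*b) ^ (m * (m + 1) / 2) * (a*b^3) ^ (m * (m - 1) / 2) := by
    intro m
    obtain ⟨p, hp⟩ := dvd_consec m
    obtain ⟨q, hq⟩ := dvd_pred m
    rw [show m * (m + 1) / 2 = p from half_eq hp,
        show m * (m - 1) / 2 = q from half_eq hq,
        show (2*m) * (2*m + 1) / 2 = 3*p + q from half_eq (by linear_combination 3*hp + hq),
        show (2*m) * (2*m - 1) / 2 = p + 3*q from half_eq (by linear_combination hp + 3*hq)]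
    have hcomb : (a^3*b) ^ p * (a*b^3) ^ q = a ^ (3*p + q) * b ^ (p + 3*q) := by
      have := zpow_comb a b ha hb 3 1 1 3 p q
      simpa [zpow_one] using this
    rw [hcomb]
    rcases Int.even_or_odd (3*p + q) with h | h
    · have h' : Even (p + 3*q) := by
        rw [Int.even_iff] at h ⊢; omega
      rw [h.neg_zpow, h'.neg_zpow]
    · have h' : Odd (p + 3*q) := by
        rw [Int.odd_iff] at h ⊢; omega
      rw [h.neg_zpow, h'.neg_zpow]; ring
  have hodd : ∀ m : ℤ,
      (-a) ^ ((2*m+1) * (2*m+1 + 1) / 2) * (-b) ^ ((2*m+1) * (2*m+1 - 1) / 2)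
        = -(a * ((a^5*b^3) ^ (m * (m + 1) / 2) * (a⁻¹*b) ^ (m * (m - 1) / 2))) := by
    intro m
    obtain ⟨p, hp⟩ := dvd_consec m
    obtain ⟨q, hq⟩ := dvd_pred m
    rw [show m * (m + 1) / 2 = p from half_eq hp,
        show m * (m - 1) / 2 = q from half_eq hq,
        show (2*m+1) * (2*m+1 + 1) / 2 = 5*p - q + 1 from
          half_eq (by linear_combination 5*hp - hq),
        show (2*m+1) * (2*m+1 - 1) / 2 = 3*p + q from
          half_eq (by linear_combination 3*hp + hq)]
    have hcomb : (a^5*b^3) ^ p * (a⁻¹*b) ^ q = a ^ (5*p - q) * b ^ (3*p + q) := by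
      have := zpow_comb a b ha hb 5 3 (-1) 1 p q
      rw [show 5*p - q = 5*p + -q by ring]
      simpa [zpow_one, zpow_neg_one, show 5*p + -1*q = 5*p - q by ring,
        show 3*p + 1*q = 3*p + q by ring] using this
    rw [hcomb]
    have hstep : a * (a ^ (5*p - q) * b ^ (3*p + q)) = a ^ (5*p - q + 1) * b ^ (3*p + q) := by
      rw [zpow_add_one₀ ha]; ring
    rw [hstep]
    rcases Int.even_or_odd (5*p - q + 1) with h | h
    · have h' : Odd (3*p + q) := by
        rw [Int.even_iff] at h; rw [Int.odd_iff]; omega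
      rw [h.neg_zpow, h'.neg_zpow]; ring
    · have h' : Even (3*p + q) := by
        rw [Int.odd_iff] at h; rw [Int.even_iff]; omega
      rw [h.neg_zpow, h'.neg_zpow]; ring
  have hG : HasSum (fun n : ℤ => (-a) ^ (n * (n + 1) / 2) * (-b) ^ (n * (n - 1) / 2))
      ((ramanujanTheta (a ^ 3 * b) (a * b ^ 3))
        + -(a * ramanujanTheta (a ^ 5 * b ^ 3) (a⁻¹ * b))) := by
    apply hasSum_int_even_add_odd
    · simpa only [heven, ramanujanTheta] using h1
    · simpa only [hodd, ramanujanTheta] using h2'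
  rw [ramanujanTheta, hG.tsum_eq]
  ring
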